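/- In the discrete upwind setting, for every time step δ > 0 and all data ρⁿ = (ρⁿ_K)_{K∈𝒯} ∈ ℝ^𝒯 and fⁿ = (fⁿ_K)_{K∈𝒯} ∈ ℝ^𝒯 there exists a unique vector ρⁿ⁺¹ = (ρⁿ⁺¹_K)_{K∈𝒯} ∈ ℝ^𝒯 solving one step of the implicit upwind scheme. (The underlying linear system, after multiplication by the volumes |K|, is strictly diagonally dominant by columns and hence invertible.) -/

import Mathlib

open Finset

/-- **Existence and uniqueness for one step of the implicit upwind scheme.**
In the discrete upwind setting (finite nonempty cell set `ι`, positive volumes `vol`,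
symmetric nonnegative edge areas `edge`, antisymmetric fluxes `u` vanishing on
non-adjacent cells), for every time step `δ > 0` and all data `ρ`, `f` there exists a
unique vector `ρ'` solving one step of the implicit upwind scheme. -/
theorem upwind_step_existsUnique {ι : Type*} [Fintype ι] [Nonempty ι] [DecidableEq ι]
    (vol : ι → ℝ) (hvol : ∀ K, 0 < vol K)
    (edge : ι → ι → ℝ) (hedge_symm : ∀ K L, edge K L = edge L K)
    (hedge_nonneg : ∀ K L, 0 ≤ edge K L)
    (u : ι → ι → ℝ) (hu_antisymm : ∀ K L, u K L = - u L K)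
    (hu_edge : ∀ K L, edge K L = 0 → u K L = 0)
    (δ : ℝ) (hδ : 0 < δ) (ρ f : ι → ℝ) :
    ∃! ρ' : ι → ℝ, ∀ K : ι,
      (ρ' K - ρ K) / δ +
        ∑ L ∈ univ.erase K, edge K L / vol K *
          (max (u K L) 0 * ρ' K - max (-u K L) 0 * ρ' L) = f K := by
  classical
  -- the matrix of the system multiplied by volumes
  set M : Matrix ι ι ℝ := fun K L =>
    if K = L then vol K / δ + ∑ L' ∈ univ.erase K, edge K L' * max (u K L') 0
    else -(edge K L * max (-u K L) 0) with hM
  set b : ι → ℝ := fun K => vol K * f K + vol K * ρ K / δ with hb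
  -- strict diagonal dominance by columns
  have hdom : ∀ L, ∑ K ∈ univ.erase L, ‖M K L‖ < ‖M L L‖ := by
    intro L
    have hdiag : M L L = vol L / δ + ∑ K ∈ univ.erase L, edge L K * max (u L K) 0 := by
      simp [hM]
    have hsum : ∑ K ∈ univ.erase L, ‖M K L‖
        = ∑ K ∈ univ.erase L, edge L K * max (u L K) 0 := by
      refine Finset.sum_congr rfl fun K hK => ?_
      have hKL : K ≠ L := (Finset.mem_erase.mp hK).1
      have : M K L = -(edge K L * max (-u K L) 0) := by simp [hM, hKL]
      rw [this, norm_neg, Real.norm_eq_abs, abs_of_nonneg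
        (mul_nonneg (hedge_nonneg K L) (le_max_right _ _))]
      rw [hedge_symm K L, hu_antisymm K L, neg_neg]
    have hdnn : 0 ≤ ∑ K ∈ univ.erase L, edge L K * max (u L K) 0 :=
      Finset.sum_nonneg fun K _ => mul_nonneg (hedge_nonneg L K) (le_max_right _ _)
    have hvolδ : 0 < vol L / δ := div_pos (hvol L) hδ
    rw [hsum, hdiag, Real.norm_eq_abs, abs_of_nonneg (by linarith)]
    linarith
  have hdet : M.det ≠ 0 := det_ne_zero_of_sum_col_lt_diag hdom
  have hunit : IsUnit M := (Matrix.isUnit_iff_isUnit_det M).mpr (isUnit_iff_ne_zero.mpr hdet)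
  have hinv : Invertible M := hunit.invertible
  -- the equation at K is equivalent to row K of the linear system
  have key : ∀ (x : ι → ℝ) (K : ι),
      ((x K - ρ K) / δ +
        ∑ L ∈ univ.erase K, edge K L / vol K *
          (max (u K L) 0 * x K - max (-u K L) 0 * x L) = f K)
      ↔ M.mulVec x K = b K := by
    intro x K
    have hvK : vol K ≠ 0 := (hvol K).ne'
    have hmv : M.mulVec x K
        = (vol K / δ + ∑ L' ∈ univ.erase K, edge K L' * max (u K L') 0) * x K
          + ∑ L ∈ univ.erase K, -(edge K L * max (-u K L) 0) * x L := by
      rw [Matrix.mulVec, dotProduct, ← Finset.add_sum_erase _ _ (Finset.mem_univ K)]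
      congr 1
      · simp [hM]
      · refine Finset.sum_congr rfl fun L hL => ?_
        have : K ≠ L := fun h => (Finset.mem_erase.mp hL).1 h.symm
        simp [hM, this]
    constructor
    · intro h
      have h' := congrArg (fun t => vol K * t) h
      rw [hmv, hb]
      rw [mul_add, Finset.mul_sum] at h'
      have hterm : ∀ L ∈ univ.erase K,
          vol K * (edge K L / vol K * (max (u K L) 0 * x K - max (-u K L) 0 * x L))
          = edge K L * max (u K L) 0 * x K + -(edge K L * max (-u K L) 0) * x L := by
        intro L _
        field_simp
        ring
      rw [Finset.sum_congr rfl hterm, Finset.sum_add_distrib] at h'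
      rw [add_mul, Finset.sum_mul]
      have : vol K * ((x K - ρ K) / δ) = vol K / δ * x K - vol K * ρ K / δ := by
        field_simp
      rw [this] at h'
      linarith [h']
    · intro h
      rw [hmv, hb] at h
      rw [add_mul, Finset.sum_mul] at h
      have hsum : ∑ L ∈ univ.erase K, edge K L / vol K *
          (max (u K L) 0 * x K - max (-u K L) 0 * x L)
          = (1 / vol K) * (∑ L ∈ univ.erase K, edge K L * max (u K L) 0 * x K
              + ∑ L ∈ univ.erase K, -(edge K L * max (-u K L) 0) * x L) := by
        rw [← Finset.sum_add_distrib, Finset.mul_sum]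
        refine Finset.sum_congr rfl fun L _ => ?_
        field_simp
        ring
      rw [hsum]
      have hx : ∑ L ∈ univ.erase K, edge K L * max (u K L) 0 * x K
              + ∑ L ∈ univ.erase K, -(edge K L * max (-u K L) 0) * x L
          = vol K * f K + vol K * ρ K / δ - vol K / δ * x K := by linarith
      rw [hx]
      field_simp
      ring
  -- solve the linear system
  refine ⟨(⅟M).mulVec b, ?_, ?_⟩
  · intro K
    rw [key]
    rw [Matrix.mulVec_mulVec, mul_invOf_self, Matrix.one_mulVec]
  · intro y hy
    have hMy : M.mulVec y = b := funext fun K => (key y K).mp (hy K)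
    have := congrArg (⅟M).mulVec hMy
    rwa [Matrix.mulVec_mulVec, invOf_mul_self, Matrix.one_mulVec] at this
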